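/- Let n ∈ ℕ, let φ : ℝⁿ → ℝⁿ satisfy φ(0) = 0, and let c > 0. For an input sequence g : ℕ → ℝⁿ, let x : ℕ → ℝⁿ be the trajectory defined by x₀ = 0 and x_{k+1} = φ(x_k) + g_k for all k. Assume the ℓ₂-gain hypothesis: for every square-summable g (i.e. ∑_{k=0}^∞ ‖g_k‖² < ∞) with trajectory x, one has ∑_{k=0}^{T} ‖x_k‖² ≤ c·∑_{k=0}^∞ ‖g_k‖² for every T ∈ ℕ. Then for every ξ ∈ ℝⁿ, the autonomous trajectory z : ℕ → ℝⁿ defined by z₀ = ξ and z_{k+1} = φ(z_k) satisfies ‖z_k‖² ≤ c·(1 − 1/c)^k·‖ξ‖² for every k ∈ ℕ; in particular the autonomous system is exponentially stable with rate ρ = √(1 − 1/c). -/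

import Mathlib

/-- Section V: an ℓ₂ gain bound for the perturbed recursion implies exponential
stability of the autonomous recursion with rate `√(1 - 1/c)`. -/
theorem stmt_2 {n : ℕ} (φ : EuclideanSpace ℝ (Fin n) → EuclideanSpace ℝ (Fin n))
    (hφ0 : φ 0 = 0) (c : ℝ) (hc : 0 < c)
    (hgain : ∀ g x : ℕ → EuclideanSpace ℝ (Fin n),
      Summable (fun k => ‖g k‖ ^ 2) → x 0 = 0 → (∀ k, x (k + 1) = φ (x k) + g k) →
      ∀ T : ℕ, ∑ k ∈ Finset.range (T + 1), ‖x k‖ ^ 2 ≤ c * ∑' k : ℕ, ‖g k‖ ^ 2) :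
    ∀ (ξ : EuclideanSpace ℝ (Fin n)) (z : ℕ → EuclideanSpace ℝ (Fin n)),
      z 0 = ξ → (∀ k, z (k + 1) = φ (z k)) →
      ∀ k : ℕ, ‖z k‖ ^ 2 ≤ c * (1 - 1 / c) ^ k * ‖ξ‖ ^ 2 := by
  -- partial sum bound for any starting point y
  have key : ∀ y : EuclideanSpace ℝ (Fin n), ∀ T : ℕ,
      ∑ k ∈ Finset.range T, ‖φ^[k] y‖ ^ 2 ≤ c * ‖y‖ ^ 2 := by
    intro y T
    set g : ℕ → EuclideanSpace ℝ (Fin n) := fun k => if k = 0 then y else 0 with hg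
    set x : ℕ → EuclideanSpace ℝ (Fin n) := fun k => Nat.rec 0 (fun m _ => φ^[m] y) k with hx
    have hgs : Summable (fun k => ‖g k‖ ^ 2) := by
      apply summable_of_finite_support
      apply Set.Finite.subset (Set.finite_singleton 0)
      intro k hk
      simp only [Function.mem_support, hg] at hk
      simp only [Set.mem_singleton_iff]
      by_contra h
      simp [h] at hk
    have hgt : (∑' k : ℕ, ‖g k‖ ^ 2) = ‖y‖ ^ 2 := by
      rw [tsum_eq_single 0]
      · simp [hg]
      · intro b hb; simp [hg, hb]
    have hx0 : x 0 = 0 := rfl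
    have hxr : ∀ k, x (k + 1) = φ (x k) + g k := by
      intro k
      cases k with
      | zero => simp [hx, hg, hφ0]
      | succ m => simp [hx, hg, Function.iterate_succ_apply']
    have := hgain g x hgs hx0 hxr T
    rw [hgt] at this
    calc ∑ k ∈ Finset.range T, ‖φ^[k] y‖ ^ 2
        ≤ ∑ k ∈ Finset.range (T + 1), ‖x k‖ ^ 2 := by
          rw [Finset.sum_range_succ']
          simp [hx0]
          exact le_rfl
      _ ≤ c * ‖y‖ ^ 2 := this
  have hsum : ∀ y : EuclideanSpace ℝ (Fin n), Summable (fun k => ‖φ^[k] y‖ ^ 2) := by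
    intro y
    exact summable_of_sum_range_le (fun k => by positivity) (key y)
  set W : EuclideanSpace ℝ (Fin n) → ℝ := fun y => ∑' k, ‖φ^[k] y‖ ^ 2 with hW
  have hWub : ∀ y, W y ≤ c * ‖y‖ ^ 2 := fun y =>
    Real.tsum_le_of_sum_range_le (fun k => by positivity) (key y)
  have hWlb : ∀ y, ‖y‖ ^ 2 ≤ W y := by
    intro y
    have := Summable.le_tsum (hsum y) 0 (fun k _ => by positivity)
    simpa using this
  have hWnn : ∀ y, 0 ≤ W y := fun y => le_trans (by positivity) (hWlb y)
  have hWstep : ∀ y, W (φ y) = W y - ‖y‖ ^ 2 := by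
    intro y
    have h1 : W y = ‖y‖ ^ 2 + ∑' k, ‖φ^[k + 1] y‖ ^ 2 := by
      have := Summable.tsum_eq_zero_add (hsum y)
      simpa using this
    have h2 : (fun k => ‖φ^[k] (φ y)‖ ^ 2) = fun k => ‖φ^[k + 1] y‖ ^ 2 := by
      funext k; rw [Function.iterate_succ_apply]
    simp only [hW, h2]
    linarith [h1]
  intro ξ z hz0 hzr k
  have hzk : ∀ k, z k = φ^[k] ξ := by
    intro k
    induction k with
    | zero => simpa using hz0
    | succ m ih => rw [hzr, ih, Function.iterate_succ_apply']
  rcases le_or_gt 1 c with hc1 | hc1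
  · -- main case: c ≥ 1
    have hr : 0 ≤ 1 - 1 / c := by
      have : 1 / c ≤ 1 := by
        rw [div_le_one hc]; exact hc1
      linarith
    have main : ∀ k, W (φ^[k] ξ) ≤ (1 - 1 / c) ^ k * (c * ‖ξ‖ ^ 2) := by
      intro k
      induction k with
      | zero => simpa using hWub ξ
      | succ m ih =>
        have hy := φ^[m] ξ
        have hstep : W (φ^[m + 1] ξ) ≤ (1 - 1 / c) * W (φ^[m] ξ) := by
          rw [Function.iterate_succ_apply', hWstep]
          have hlow : W (φ^[m] ξ) / c ≤ ‖φ^[m] ξ‖ ^ 2 := by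
            rw [div_le_iff₀ hc]
            calc W (φ^[m] ξ) ≤ c * ‖φ^[m] ξ‖ ^ 2 := hWub _
              _ = ‖φ^[m] ξ‖ ^ 2 * c := by ring
          have : W (φ^[m] ξ) - ‖φ^[m] ξ‖ ^ 2 ≤ W (φ^[m] ξ) - W (φ^[m] ξ) / c := by
            linarith
          calc W (φ^[m] ξ) - ‖φ^[m] ξ‖ ^ 2 ≤ W (φ^[m] ξ) - W (φ^[m] ξ) / c := this
            _ = (1 - 1 / c) * W (φ^[m] ξ) := by ring
        calc W (φ^[m + 1] ξ) ≤ (1 - 1 / c) * W (φ^[m] ξ) := hstep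
          _ ≤ (1 - 1 / c) * ((1 - 1 / c) ^ m * (c * ‖ξ‖ ^ 2)) :=
              mul_le_mul_of_nonneg_left ih hr
          _ = (1 - 1 / c) ^ (m + 1) * (c * ‖ξ‖ ^ 2) := by ring
    calc ‖z k‖ ^ 2 = ‖φ^[k] ξ‖ ^ 2 := by rw [hzk]
      _ ≤ W (φ^[k] ξ) := hWlb _
      _ ≤ (1 - 1 / c) ^ k * (c * ‖ξ‖ ^ 2) := main k
      _ = c * (1 - 1 / c) ^ k * ‖ξ‖ ^ 2 := by ring
  · -- degenerate case: c < 1 forces ξ = 0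
    have h1 : ‖ξ‖ ^ 2 ≤ c * ‖ξ‖ ^ 2 := le_trans (hWlb ξ) (hWub ξ)
    have hξ : ‖ξ‖ ^ 2 = 0 := by nlinarith [sq_nonneg ‖ξ‖]
    have hξ0 : ξ = 0 := by
      have : ‖ξ‖ = 0 := by nlinarith
      exact norm_eq_zero.mp this
    have hz : ∀ k, z k = 0 := by
      intro k
      induction k with
      | zero => rw [hz0, hξ0]
      | succ m ih => rw [hzr, ih, hφ0]
    rw [hz k, hξ]
    simp
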